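/- Independence of the tree in the detailed balanced case: let n ≥ 1 and let M : Matrix (Fin n) (Fin n) ℝ be detailed balanced with respect to a positive vector w₀ : Fin n → ℝ (w₀ i > 0 for all i, and M i j * w₀ j = M j i * w₀ i for all i, j). Let G₁, G₂ : SimpleGraph (Fin n) both be trees (IsTree), and define w^{G₁}, w^{G₂} : Fin n → ℝ by w^G k = ∏ over all ordered pairs (i, j) with G.Adj i j and G.dist i k = G.dist j k + 1 of M i j. Then the two vectors are proportional: for all i, j : Fin n, w^{G₁} i * w^{G₂} j = w^{G₁} j * w^{G₂} i. -/

import Mathlib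

open scoped Classical

namespace TreeOrientAux

variable {V : Type*} {G : SimpleGraph V}

/-- In a tree, every path realizes the distance. -/
lemma path_length_eq_dist (hG : G.IsTree) {u v : V} (p : G.Walk u v) (hp : p.IsPath) :
    p.length = G.dist u v := by
  obtain ⟨q, hq⟩ := hG.isConnected.exists_walk_length_eq_dist u v
  have hqp : q.IsPath := q.isPath_of_length_eq_dist hq
  have := (hG.existsUnique_path u v).unique hp hqp
  rw [this, hq]

/-- In a tree, adjacent vertices have distances to any vertex differing by one. -/
lemma dist_adj (hG : G.IsTree) {u v : V} (h : G.Adj u v) (k : V) :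
    G.dist u k = G.dist v k + 1 ∨ G.dist v k = G.dist u k + 1 := by
  obtain ⟨p, hp, -⟩ := hG.existsUnique_path u k
  have hlen : p.length = G.dist u k := path_length_eq_dist hG p hp
  by_cases hv : v ∈ p.support
  · left
    have htake : (p.takeUntil v hv).length = G.dist u v :=
      path_length_eq_dist hG _ (hp.takeUntil hv)
    have hdrop : (p.dropUntil v hv).length = G.dist v k :=
      path_length_eq_dist hG _ (hp.dropUntil hv)
    have hspec := p.take_spec hv
    have : (p.takeUntil v hv).length + (p.dropUntil v hv).length = p.length := by
      have h' := congrArg SimpleGraph.Walk.length hspec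
      rwa [SimpleGraph.Walk.length_append] at h'
    have huv : G.dist u v = 1 := SimpleGraph.dist_eq_one_iff_adj.mpr h
    omega
  · right
    have hq : (SimpleGraph.Walk.cons h.symm p).IsPath := hp.cons hv
    have := path_length_eq_dist hG _ hq
    simp only [SimpleGraph.Walk.length_cons] at this
    omega

/-- In a tree, the orientation of an edge `(i,j)` toward a root is the same for two
adjacent roots `u`, `v`, except for the edge `{u,v}` itself. -/
lemma side_invariant (hG : G.IsTree) {u v i j : V} (huv : G.Adj u v) (hij : G.Adj i j)
    (h2 : ¬(i = v ∧ j = u))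
    (hu : G.dist i u = G.dist j u + 1) : G.dist i v = G.dist j v + 1 := by
  rcases dist_adj hG hij v with h | h
  · exact h
  exfalso
  have hIu := dist_adj hG huv i
  have hJu := dist_adj hG huv j
  rw [SimpleGraph.dist_comm (u := u), SimpleGraph.dist_comm (u := v)] at hIu hJu
  -- Let a := dist j u.  Then dist i u = a+1, and we derive dist i v = a, dist j v = a+1.
  have hiv : G.dist i v = G.dist j u := by omega
  have hjv : G.dist j v = G.dist j u + 1 := by omega
  have ha : 1 ≤ G.dist j u := by
    by_contra hcon
    have h0 : G.dist j u = 0 := by omega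
    have hju : j = u := (hG.isConnected.dist_eq_zero_iff).mp h0
    have hiv0 : G.dist i v = 0 := by omega
    have hivv : i = v := (hG.isConnected.dist_eq_zero_iff).mp hiv0
    exact h2 ⟨hivv, hju⟩
  -- unique paths
  obtain ⟨p, hp, -⟩ := hG.existsUnique_path i v
  have hplen : p.length = G.dist i v := path_length_eq_dist hG p hp
  obtain ⟨p', hp', -⟩ := hG.existsUnique_path j u
  have hp'len : p'.length = G.dist j u := path_length_eq_dist hG p' hp'
  -- two paths from i to u
  have hlen1 : (p.concat huv.symm).length = G.dist i u := by
    rw [SimpleGraph.Walk.length_concat]; omega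
  have hpath1 : (p.concat huv.symm).IsPath :=
    (p.concat huv.symm).isPath_of_length_eq_dist hlen1
  have hlen2 : (SimpleGraph.Walk.cons hij p').length = G.dist i u := by
    simp only [SimpleGraph.Walk.length_cons]; omega
  have hpath2 : (SimpleGraph.Walk.cons hij p').IsPath :=
    (SimpleGraph.Walk.cons hij p').isPath_of_length_eq_dist hlen2
  have heq : p.concat huv.symm = SimpleGraph.Walk.cons hij p' :=
    (hG.existsUnique_path i u).unique hpath1 hpath2
  -- j lies on p
  have hjmem : j ∈ (p.concat huv.symm).support := by
    rw [heq, SimpleGraph.Walk.support_cons]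
    exact List.mem_cons_of_mem _ p'.start_mem_support
  rw [SimpleGraph.Walk.support_concat] at hjmem
  have hjne : j ≠ u := by
    intro hju
    have : G.dist j u = 0 := by rw [hju]; exact SimpleGraph.dist_self
    omega
  have hjp : j ∈ p.support := by
    rw [List.mem_append] at hjmem
    rcases hjmem with h' | h'
    · exact h'
    · simp only [List.mem_singleton] at h'
      exact absurd h' hjne
  -- then dist j v ≤ length of the tail of p, which is ≤ dist i v = dist j u < dist j v
  have hdle : G.dist j v ≤ (p.dropUntil j hjp).length := SimpleGraph.dist_le _
  have hsplit : (p.takeUntil j hjp).length + (p.dropUntil j hjp).length = p.length := by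
    have h' := congrArg SimpleGraph.Walk.length (p.take_spec hjp)
    rwa [SimpleGraph.Walk.length_append] at h'
  omega

/-- The main step: for adjacent roots the oriented products satisfy detailed balance. -/
lemma step_eq [Fintype V] (hG : G.IsTree) (M : V → V → ℝ) (w₀ : V → ℝ)
    (hdb : ∀ i j, M i j * w₀ j = M j i * w₀ i) {u v : V} (huv : G.Adj u v) :
    (∏ p ∈ Finset.univ.filter
        (fun p : V × V => G.Adj p.1 p.2 ∧ G.dist p.1 u = G.dist p.2 u + 1), M p.1 p.2) * w₀ u
    = (∏ p ∈ Finset.univ.filter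
        (fun p : V × V => G.Adj p.1 p.2 ∧ G.dist p.1 v = G.dist p.2 v + 1), M p.1 p.2) * w₀ v := by
  classical
  set Su := Finset.univ.filter
      (fun p : V × V => G.Adj p.1 p.2 ∧ G.dist p.1 u = G.dist p.2 u + 1) with hSu
  set Sv := Finset.univ.filter
      (fun p : V × V => G.Adj p.1 p.2 ∧ G.dist p.1 v = G.dist p.2 v + 1) with hSv
  have hvu : (v, u) ∈ Su := by
    simp only [hSu, Finset.mem_filter, Finset.mem_univ, true_and]
    exact ⟨huv.symm, by
      rw [SimpleGraph.dist_self, SimpleGraph.dist_comm]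
      simpa using SimpleGraph.dist_eq_one_iff_adj.mpr huv⟩
  have huvm : (u, v) ∈ Sv := by
    simp only [hSv, Finset.mem_filter, Finset.mem_univ, true_and]
    exact ⟨huv, by
      rw [SimpleGraph.dist_self]
      simpa using SimpleGraph.dist_eq_one_iff_adj.mpr huv⟩
  have herase : Su.erase (v, u) = Sv.erase (u, v) := by
    ext ⟨i, j⟩
    simp only [Finset.mem_erase, hSu, hSv, Finset.mem_filter, Finset.mem_univ, true_and,
      Ne, Prod.mk.injEq, not_and]
    constructor
    · rintro ⟨hne, hij, hd⟩
      have hd' : G.dist i v = G.dist j v + 1 :=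
        side_invariant hG huv hij (by intro ⟨h1, h2⟩; exact hne h1 h2) hd
      refine ⟨?_, hij, hd'⟩
      rintro rfl rfl
      have := SimpleGraph.dist_self (G := G) (v := i)
      omega
    · rintro ⟨hne, hij, hd⟩
      have hd' : G.dist i u = G.dist j u + 1 :=
        side_invariant hG huv.symm hij (by intro ⟨h1, h2⟩; exact hne h1 h2) hd
      refine ⟨?_, hij, hd'⟩
      rintro rfl rfl
      have := SimpleGraph.dist_self (G := G) (v := i)
      omega
  have h1 : ∏ p ∈ Su, M p.1 p.2 = M v u * ∏ p ∈ Su.erase (v, u), M p.1 p.2 :=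
    (Finset.mul_prod_erase Su _ hvu).symm
  have h2 : ∏ p ∈ Sv, M p.1 p.2 = M u v * ∏ p ∈ Sv.erase (u, v), M p.1 p.2 :=
    (Finset.mul_prod_erase Sv _ huvm).symm
  rw [h1, h2, herase]
  linear_combination (∏ p ∈ Sv.erase (u, v), M p.1 p.2) * hdb v u

/-- The quantity `w^G k * w₀ k` does not depend on the root `k`. -/
lemma root_invariant [Fintype V] (hG : G.IsTree) (M : V → V → ℝ) (w₀ : V → ℝ)
    (hdb : ∀ i j, M i j * w₀ j = M j i * w₀ i) (x y : V) :
    (∏ p ∈ Finset.univ.filter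
        (fun p : V × V => G.Adj p.1 p.2 ∧ G.dist p.1 x = G.dist p.2 x + 1), M p.1 p.2) * w₀ x
    = (∏ p ∈ Finset.univ.filter
        (fun p : V × V => G.Adj p.1 p.2 ∧ G.dist p.1 y = G.dist p.2 y + 1), M p.1 p.2) * w₀ y := by
  obtain ⟨w⟩ := hG.isConnected x y
  induction w with
  | nil => rfl
  | cons h q ih => exact (step_eq hG M w₀ hdb h).trans ih

end TreeOrientAux

/-- Independence of the tree in the detailed balanced case: the vectors
obtained from two different trees by orienting all edges toward each root and
multiplying matrix entries are proportional. -/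
theorem tree_orientation_independent_of_tree (n : ℕ) (hn : 1 ≤ n)
    (M : Matrix (Fin n) (Fin n) ℝ)
    (w₀ : Fin n → ℝ) (hw₀ : ∀ i, 0 < w₀ i)
    (hdb : ∀ i j, M i j * w₀ j = M j i * w₀ i)
    (G₁ G₂ : SimpleGraph (Fin n)) (hG₁ : G₁.IsTree) (hG₂ : G₂.IsTree)
    (w₁ w₂ : Fin n → ℝ)
    (hw₁ : ∀ k : Fin n, w₁ k =
      ∏ p ∈ Finset.univ.filter
          (fun p : Fin n × Fin n => G₁.Adj p.1 p.2 ∧ G₁.dist p.1 k = G₁.dist p.2 k + 1),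
        M p.1 p.2)
    (hw₂ : ∀ k : Fin n, w₂ k =
      ∏ p ∈ Finset.univ.filter
          (fun p : Fin n × Fin n => G₂.Adj p.1 p.2 ∧ G₂.dist p.1 k = G₂.dist p.2 k + 1),
        M p.1 p.2) :
    ∀ i j : Fin n, w₁ i * w₂ j = w₁ j * w₂ i := by
  intro i j
  have h1 : w₁ i * w₀ i = w₁ j * w₀ j := by
    rw [hw₁ i, hw₁ j]
    exact TreeOrientAux.root_invariant hG₁ (fun a b => M a b) w₀ hdb i j
  have h2 : w₂ j * w₀ j = w₂ i * w₀ i := by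
    rw [hw₂ j, hw₂ i]
    exact TreeOrientAux.root_invariant hG₂ (fun a b => M a b) w₀ hdb j i
  have hkey : (w₁ i * w₂ j) * (w₀ i * w₀ j) = (w₁ j * w₂ i) * (w₀ i * w₀ j) := by
    calc (w₁ i * w₂ j) * (w₀ i * w₀ j) = (w₁ i * w₀ i) * (w₂ j * w₀ j) := by ring
    _ = (w₁ j * w₀ j) * (w₂ i * w₀ i) := by rw [h1, h2]
    _ = (w₁ j * w₂ i) * (w₀ i * w₀ j) := by ring
  exact mul_right_cancel₀ (ne_of_gt (mul_pos (hw₀ i) (hw₀ j))) hkey
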